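/- Let n ≥ 1 be an integer and α ∈ (0,n). Then there exists a constant C > 0, depending only on n and α, such that for all x, y ∈ ℝⁿ with |x| ≥ 2|y| and x ≠ 0 one has |G_α(x−y) − G_α(x)| ≤ C · |y| · |x|^{α−1−n}. -/

import Mathlib

open MeasureTheory Metric Set
open scoped ENNReal NNReal

/-- The (unnormalized) Bessel kernel `G_α` on `ℝⁿ`, with values in `[0,∞]`. -/
noncomputable def besselKernel (n : ℕ) (α : ℝ) (x : EuclideanSpace ℝ (Fin n)) : ℝ≥0∞ :=
  ∫⁻ u in Set.Ioi (0 : ℝ),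
    ENNReal.ofReal (Real.exp (-(Real.pi * ‖x‖ ^ 2 / u) - u / (4 * Real.pi)) *
      u ^ ((α - n) / 2 - 1))

lemma aux_exp_sub_exp {p q m : ℝ} (hp : m ≤ p) (hq : m ≤ q) :
    |Real.exp (-p) - Real.exp (-q)| ≤ |p - q| * Real.exp (-m) := by
  wlog h : q ≤ p generalizing p q
  · rw [abs_sub_comm, abs_sub_comm p q]; exact this hq hp (le_of_not_ge h)
  have he : Real.exp (-p) ≤ Real.exp (-q) := Real.exp_le_exp.mpr (by linarith)
  rw [abs_of_nonpos (by linarith), abs_of_nonneg (by linarith)]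
  have h1 : Real.exp (-p) = Real.exp (-q) * Real.exp (-(p - q)) := by
    rw [← Real.exp_add]; ring_nf
  have h2 : 1 - (p - q) ≤ Real.exp (-(p - q)) := by
    have := Real.add_one_le_exp (-(p - q)); linarith
  have h3 : Real.exp (-q) ≤ Real.exp (-m) := Real.exp_le_exp.mpr (by linarith)
  nlinarith [Real.exp_pos (-q), Real.exp_pos (-m)]

lemma aux_integral {c r : ℝ} (hc : 0 < c) (hr : r < 0) :
    ∫ u in Ioi (0:ℝ), Real.exp (-(c/u)) * u ^ (r-1) = c ^ r * Real.Gamma (-r) := by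
  have h := integral_comp_rpow_Ioi (fun u : ℝ => Real.exp (-(c/u)) * u ^ (r-1))
      (p := -1) (by norm_num)
  rw [← h]
  rw [show (∫ x in Ioi (0:ℝ), (|(-1:ℝ)| * x ^ ((-1:ℝ) - 1)) •
      ((fun u : ℝ => Real.exp (-(c/u)) * u ^ (r-1)) (x ^ (-1:ℝ))))
      = ∫ t in Ioi (0:ℝ), t ^ (-r - 1) * Real.exp (-(c * t)) from ?_]
  · rw [Real.integral_rpow_mul_exp_neg_mul_Ioi (by linarith : (0:ℝ) < -r) hc]
    rw [one_div, Real.inv_rpow hc.le, ← Real.rpow_neg hc.le, neg_neg]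
  · refine setIntegral_congr_fun measurableSet_Ioi (fun x hx => ?_)
    have hx0 : 0 < x := hx
    simp only [smul_eq_mul]
    rw [Real.rpow_neg_one, div_eq_mul_inv, inv_inv, Real.inv_rpow hx0.le, ← Real.rpow_neg hx0.le]
    rw [abs_neg, abs_one, one_mul]
    rw [show ((-1:ℝ) - 1) = -2 by norm_num]
    rw [mul_comm (Real.exp _) _, ← mul_assoc, ← Real.rpow_add hx0,
      show (-2:ℝ) + -(r-1) = -r - 1 by ring, mul_comm]

lemma aux_integrable {c r : ℝ} (hc : 0 < c) (hr : r < 0) :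
    IntegrableOn (fun u : ℝ => Real.exp (-(c/u)) * u ^ (r-1)) (Ioi 0) := by
  rw [← integrableOn_Ioi_comp_rpow_iff (fun u : ℝ => Real.exp (-(c/u)) * u ^ (r-1))
      (p := -1) (by norm_num)]
  have hbase : IntegrableOn (fun x : ℝ => x ^ (-r-1) * Real.exp (-c * x ^ (1:ℝ))) (Ioi 0) :=
    integrableOn_rpow_mul_exp_neg_mul_rpow (by linarith) one_pos hc
  refine (integrableOn_congr_fun (fun x hx => ?_) measurableSet_Ioi).mpr hbase
  have hx0 : 0 < x := hx
  simp only [smul_eq_mul]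
  rw [Real.rpow_one, Real.rpow_neg_one, div_eq_mul_inv, inv_inv, Real.inv_rpow hx0.le,
    ← Real.rpow_neg hx0.le, abs_neg, abs_one, one_mul,
    show ((-1:ℝ) - 1) = -2 by norm_num]
  rw [mul_comm (Real.exp _) _, ← mul_assoc, ← Real.rpow_add hx0,
    show (-2:ℝ) + -(r-1) = -r - 1 by ring, neg_mul, mul_comm]

lemma aux_lintegral {c r : ℝ} (hc : 0 < c) (hr : r < 0) :
    ∫⁻ u in Ioi (0:ℝ), ENNReal.ofReal (Real.exp (-(c/u)) * u ^ (r-1))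
      = ENNReal.ofReal (c ^ r * Real.Gamma (-r)) := by
  rw [← ofReal_integral_eq_lintegral_ofReal (aux_integrable hc hr) ?_, aux_integral hc hr]
  filter_upwards [self_mem_ae_restrict (measurableSet_Ioi : MeasurableSet (Ioi (0:ℝ)))] with u hu
  have : (0:ℝ) < u := hu
  positivity

theorem statement8 (n : ℕ) (hn : 1 ≤ n) (α : ℝ) (hα : 0 < α) (hα' : α < n) :
    ∃ C : ℝ, 0 < C ∧
      ∀ x y : EuclideanSpace ℝ (Fin n), x ≠ 0 → 2 * ‖y‖ ≤ ‖x‖ →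
        |(besselKernel n α (x - y)).toReal - (besselKernel n α x).toReal| ≤
          C * ‖y‖ * ‖x‖ ^ (α - 1 - n) := by
  have hπ : (0:ℝ) < Real.pi := Real.pi_pos
  set s : ℝ := (α - n) / 2 with hs_def
  have hαn : α - (n:ℝ) < 0 := by linarith
  have hs : s < 0 := by rw [hs_def]; linarith
  have hs1 : s - 1 < 0 := by linarith
  have hΓ : 0 < Real.Gamma (-(s-1)) := Real.Gamma_pos_of_pos (by linarith)
  refine ⟨3 * Real.pi * (Real.pi/4) ^ (s-1) * Real.Gamma (-(s-1)), by positivity, ?_⟩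
  intro x y hx0 hxy
  have hx : 0 < ‖x‖ := norm_pos_iff.mpr hx0
  have hy : 0 ≤ ‖y‖ := norm_nonneg y
  have hy2 : 2 * ‖y‖ ≤ ‖x‖ := hxy
  have hsub1 : ‖x - (x - y)‖ = ‖y‖ := by rw [sub_sub_cancel]
  have hxy2 : ‖x‖/2 ≤ ‖x - y‖ := by
    have := norm_sub_norm_le x (x - y)
    rw [hsub1] at this; linarith
  have hxy3 : ‖x - y‖ ≤ 3/2 * ‖x‖ := by
    have := norm_sub_le x y; linarith
  set c₁ : ℝ := Real.pi * ‖x - y‖^2 with hc₁def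
  set c₂ : ℝ := Real.pi * ‖x‖^2 with hc₂def
  have hc₂ : 0 < c₂ := by rw [hc₂def]; positivity
  have hc₁ : 0 < c₁ := by
    rw [hc₁def]; have : 0 < ‖x - y‖ := by linarith
    positivity
  have hq1 : c₂/4 ≤ c₁ := by
    have hsq : (‖x‖/2)^2 ≤ ‖x - y‖^2 := pow_le_pow_left₀ (by positivity) hxy2 2
    rw [hc₁def, hc₂def]; nlinarith [hsq, hπ]
  have hq2 : c₂/4 ≤ c₂ := by linarith
  have habs : |c₁ - c₂| ≤ 3 * Real.pi * ‖x‖ * ‖y‖ := by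
    have h0 : |‖x - y‖ - ‖x‖| ≤ ‖y‖ := by
      have := abs_norm_sub_norm_le (x - y) x
      rwa [show x - y - x = -y by abel, norm_neg] at this
    have hsum0 : (0:ℝ) ≤ ‖x - y‖ + ‖x‖ := by positivity
    have hsum : ‖x - y‖ + ‖x‖ ≤ 3 * ‖x‖ := by linarith
    calc |c₁ - c₂| = Real.pi * (|‖x - y‖ - ‖x‖| * |‖x - y‖ + ‖x‖|) := by
          rw [show c₁ - c₂ = Real.pi * ((‖x - y‖ - ‖x‖) * (‖x - y‖ + ‖x‖)) by
            rw [hc₁def, hc₂def]; ring, abs_mul, abs_mul, abs_of_pos hπ]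
      _ ≤ Real.pi * (‖y‖ * (3 * ‖x‖)) := by
          rw [abs_of_nonneg hsum0]
          exact mul_le_mul_of_nonneg_left
            (mul_le_mul h0 hsum hsum0 hy) hπ.le
      _ = 3 * Real.pi * ‖x‖ * ‖y‖ := by ring
  -- pointwise bound
  have hpt : ∀ u ∈ Ioi (0:ℝ),
      |Real.exp (-(c₁/u) - u/(4*Real.pi)) * u ^ (s-1)
        - Real.exp (-(c₂/u) - u/(4*Real.pi)) * u ^ (s-1)|
      ≤ (3*Real.pi*‖x‖*‖y‖) * (Real.exp (-((c₂/4)/u)) * u ^ ((s-1)-1)) := by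
    intro u hu
    have hu0 : 0 < u := hu
    have hU : (0:ℝ) ≤ u ^ (s-1) := Real.rpow_nonneg hu0.le _
    have hsplit : ∀ c : ℝ, Real.exp (-(c/u) - u/(4*Real.pi))
        = Real.exp (-(c/u)) * Real.exp (-(u/(4*Real.pi))) := fun c => by
      rw [← Real.exp_add]; ring_nf
    rw [hsplit, hsplit]
    have hA : (c₂/4)/u ≤ c₁/u := by gcongr
    have hB : (c₂/4)/u ≤ c₂/u := by gcongr
    have key2 : |Real.exp (-(c₁/u)) - Real.exp (-(c₂/u))|
        ≤ (3*Real.pi*‖x‖*‖y‖)/u * Real.exp (-((c₂/4)/u)) := by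
      refine le_trans (aux_exp_sub_exp hA hB) ?_
      have e1 : |c₁/u - c₂/u| = |c₁ - c₂|/u := by
        rw [div_sub_div_same, abs_div, abs_of_pos hu0]
      rw [e1]
      gcongr
    have expand : u ^ (s-1) = u ^ ((s-1)-1) * u := by
      rw [show s - 1 = ((s-1)-1) + 1 by ring, Real.rpow_add_one hu0.ne']
      ring_nf
    have hE0 : (0:ℝ) < Real.exp (-(u/(4*Real.pi))) := Real.exp_pos _
    have hE1 : Real.exp (-(u/(4*Real.pi))) ≤ 1 := by
      rw [Real.exp_le_one_iff]
      have : 0 ≤ u/(4*Real.pi) := by positivity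
      linarith
    rw [show Real.exp (-(c₁/u)) * Real.exp (-(u/(4*Real.pi))) * u ^ (s-1)
        - Real.exp (-(c₂/u)) * Real.exp (-(u/(4*Real.pi))) * u ^ (s-1)
        = (Real.exp (-(c₁/u)) - Real.exp (-(c₂/u)))
            * (Real.exp (-(u/(4*Real.pi))) * u ^ (s-1)) by ring, abs_mul]
    have hval : (0:ℝ) ≤ Real.exp (-(u/(4*Real.pi))) * u ^ (s-1) := by positivity
    rw [abs_of_nonneg hval]
    calc |Real.exp (-(c₁/u)) - Real.exp (-(c₂/u))|
          * (Real.exp (-(u/(4*Real.pi))) * u ^ (s-1))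
        ≤ ((3*Real.pi*‖x‖*‖y‖)/u * Real.exp (-((c₂/4)/u)))
          * (Real.exp (-(u/(4*Real.pi))) * u ^ (s-1)) := by
          exact mul_le_mul_of_nonneg_right key2 (by positivity)
      _ ≤ ((3*Real.pi*‖x‖*‖y‖)/u * Real.exp (-((c₂/4)/u))) * (1 * u ^ (s-1)) := by
          gcongr <;> positivity
      _ = (3*Real.pi*‖x‖*‖y‖) * (Real.exp (-((c₂/4)/u)) * u ^ ((s-1)-1)) := by
          rw [expand]; field_simp
  -- measurability
  have measF : ∀ c : ℝ, Measurable fun u : ℝ =>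
      ENNReal.ofReal (Real.exp (-(c/u) - u/(4*Real.pi)) * u ^ (s-1)) := by
    intro c
    apply Measurable.ennreal_ofReal
    apply Measurable.mul
    · exact (((measurable_const.div measurable_id).neg.sub
        (measurable_id.div_const _)).exp)
    · exact measurable_id.pow measurable_const
  -- identify besselKernel with our normal form
  have hBeq : besselKernel n α x
      = ∫⁻ u in Ioi (0:ℝ), ENNReal.ofReal (Real.exp (-(c₂/u) - u/(4*Real.pi)) * u ^ (s-1)) := by
    rw [besselKernel, hc₂def, hs_def]
  have hAeq : besselKernel n α (x - y)
      = ∫⁻ u in Ioi (0:ℝ), ENNReal.ofReal (Real.exp (-(c₁/u) - u/(4*Real.pi)) * u ^ (s-1)) := by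
    rw [besselKernel, hc₁def, hs_def]
  set D : ℝ≥0∞ := ENNReal.ofReal
    ((3*Real.pi*‖x‖*‖y‖) * ((c₂/4) ^ (s-1) * Real.Gamma (-(s-1)))) with hDdef
  -- value of the dominating integral
  have hG : (∫⁻ u in Ioi (0:ℝ), ENNReal.ofReal
      ((3*Real.pi*‖x‖*‖y‖) * (Real.exp (-((c₂/4)/u)) * u ^ ((s-1)-1)))) = D := by
    have hT : (0:ℝ) ≤ 3*Real.pi*‖x‖*‖y‖ := by positivity
    simp_rw [ENNReal.ofReal_mul hT]
    rw [lintegral_const_mul' _ _ ENNReal.ofReal_ne_top,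
      aux_lintegral (by linarith : (0:ℝ) < c₂/4) hs1, hDdef, ENNReal.ofReal_mul hT]
  -- bound: B finite
  have hBbd : besselKernel n α x ≤ ENNReal.ofReal (c₂ ^ s * Real.Gamma (-s)) := by
    rw [hBeq, ← aux_lintegral hc₂ hs]
    refine lintegral_mono_ae ?_
    filter_upwards [self_mem_ae_restrict (measurableSet_Ioi : MeasurableSet (Ioi (0:ℝ)))]
      with u hu
    have hu0 : 0 < u := hu
    apply ENNReal.ofReal_le_ofReal
    apply mul_le_mul_of_nonneg_right _ (Real.rpow_nonneg hu0.le _)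
    apply Real.exp_le_exp.mpr
    have : 0 ≤ u/(4*Real.pi) := by positivity
    linarith
  -- A ≤ B + D and B ≤ A + D
  have hAB : besselKernel n α (x - y) ≤ besselKernel n α x + D := by
    rw [hAeq, hBeq, ← hG, ← lintegral_add_left (measF c₂)]
    refine lintegral_mono_ae ?_
    filter_upwards [self_mem_ae_restrict (measurableSet_Ioi : MeasurableSet (Ioi (0:ℝ)))]
      with u hu
    have h := hpt u hu
    refine le_trans (ENNReal.ofReal_le_ofReal ?_) (ENNReal.ofReal_add_le)
    have := abs_le.mp h
    linarith [this.1, this.2]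
  have hBA : besselKernel n α x ≤ besselKernel n α (x - y) + D := by
    rw [hAeq, hBeq, ← hG, ← lintegral_add_left (measF c₁)]
    refine lintegral_mono_ae ?_
    filter_upwards [self_mem_ae_restrict (measurableSet_Ioi : MeasurableSet (Ioi (0:ℝ)))]
      with u hu
    have h := hpt u hu
    refine le_trans (ENNReal.ofReal_le_ofReal ?_) (ENNReal.ofReal_add_le)
    have := abs_le.mp h
    linarith [this.1, this.2]
  have hDtop : D ≠ ⊤ := ENNReal.ofReal_ne_top
  have hBtop : besselKernel n α x ≠ ⊤ := ne_top_of_le_ne_top ENNReal.ofReal_ne_top hBbd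
  have hBD : besselKernel n α x + D ≠ ⊤ := ENNReal.add_ne_top.mpr ⟨hBtop, hDtop⟩
  have hAtop : besselKernel n α (x - y) ≠ ⊤ := ne_top_of_le_ne_top hBD hAB
  have hAD : besselKernel n α (x - y) + D ≠ ⊤ := ENNReal.add_ne_top.mpr ⟨hAtop, hDtop⟩
  have h1 : (besselKernel n α (x - y)).toReal
      ≤ (besselKernel n α x).toReal + D.toReal := by
    have := ENNReal.toReal_mono hBD hAB
    rwa [ENNReal.toReal_add hBtop hDtop] at this
  have h2 : (besselKernel n α x).toReal
      ≤ (besselKernel n α (x - y)).toReal + D.toReal := by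
    have := ENNReal.toReal_mono hAD hBA
    rwa [ENNReal.toReal_add hAtop hDtop] at this
  have hDval : D.toReal
      = 3*Real.pi*‖x‖*‖y‖ * ((c₂/4) ^ (s-1) * Real.Gamma (-(s-1))) := by
    rw [hDdef, ENNReal.toReal_ofReal (by positivity)]
  have hfin : 3*Real.pi*‖x‖*‖y‖ * ((c₂/4) ^ (s-1) * Real.Gamma (-(s-1)))
      = 3 * Real.pi * (Real.pi/4) ^ (s-1) * Real.Gamma (-(s-1)) * ‖y‖
        * ‖x‖ ^ (α - 1 - (n:ℝ)) := by
    have h24 : c₂/4 = (Real.pi/4) * ‖x‖^2 := by rw [hc₂def]; ring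
    rw [h24, Real.mul_rpow (by positivity) (by positivity)]
    have hsq : ((‖x‖^2 : ℝ)) ^ (s-1) = ‖x‖ ^ (2*(s-1)) := by
      rw [← Real.rpow_natCast ‖x‖ 2, ← Real.rpow_mul (norm_nonneg x)]
      norm_num
    rw [hsq]
    have hxp : ‖x‖ ^ (α - 1 - (n:ℝ)) = ‖x‖ * ‖x‖ ^ (2*(s-1)) := by
      rw [show α - 1 - (n:ℝ) = 1 + 2*(s-1) by rw [hs_def]; ring,
        Real.rpow_add hx, Real.rpow_one]
    rw [hxp]; ring
  have hDle : D.toReal = 3 * Real.pi * (Real.pi/4) ^ (s-1) * Real.Gamma (-(s-1)) * ‖y‖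
      * ‖x‖ ^ (α - 1 - (n:ℝ)) := by rw [hDval, hfin]
  rw [abs_sub_le_iff]
  exact ⟨by linarith, by linarith⟩
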